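/- Let p = (p₁,p₂) be an integer pair with 0 ≤ p₁ ≤ p₂, let Ω ⊆ ℝ² be open, let f be continuously differentiable on Ω, and let x ∈ Ω. Then lim_{l→0⁺} (1/l²) · Σ_{D(x',l) ∼_p D(x,l)} ( I(f,x',l) − I(f,x,l) )² = 4 (p₁² + p₂²) c_p |∇f(x)|². -/

import Mathlib

open MeasureTheory Real Filter Topology

noncomputable section

/-- The `l`-square centered at `x`. -/
def Dsq (x : ℝ × ℝ) (l : ℝ) : Set (ℝ × ℝ) :=
  Set.Icc (x.1 - l / 2) (x.1 + l / 2) ×ˢ Set.Icc (x.2 - l / 2) (x.2 + l / 2)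

/-- `I(f,x,l)`: the average of `f` over the `l`-square centered at `x`. -/
def Iavg (f : ℝ × ℝ → ℝ) (x : ℝ × ℝ) (l : ℝ) : ℝ :=
  (1 / l ^ 2) * ∫ ξ in Dsq x l, f ξ

/-- `D(x',l)` is a `p`-neighbor of `D(x,l)`. -/
def isNbr (p : ℤ × ℤ) (l : ℝ) (x x' : ℝ × ℝ) : Prop :=
  (|x'.1 - x.1| = (p.1 : ℝ) * l ∧ |x'.2 - x.2| = (p.2 : ℝ) * l) ∨
    (|x'.1 - x.1| = (p.2 : ℝ) * l ∧ |x'.2 - x.2| = (p.1 : ℝ) * l)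

/-- `I_p(f,x,l)`: sum of averages over all `p`-neighbors of `D(x,l)`. -/
def Ipavg (f : ℝ × ℝ → ℝ) (p : ℤ × ℤ) (x : ℝ × ℝ) (l : ℝ) : ℝ :=
  ∑ᶠ x' ∈ {x' : ℝ × ℝ | isNbr p l x x'}, Iavg f x' l

/-- The constant `c_p` (for integer pairs with `0 ≤ p₁ ≤ p₂`). -/
def cP (p : ℤ × ℤ) : ℝ :=
  if p.1 = 0 ∧ p.2 = 0 then 1 / 8 else if p.1 = 0 ∨ p.1 = p.2 then 1 / 2 else 1

/-- The constant `T_p^(k)`. -/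
def Tc (p : ℤ × ℤ) (k : ℕ) : ℝ :=
  2 * cP p *
    (((2 * (p.1 : ℂ) + 1) + (2 * (p.2 : ℂ) + 1) * Complex.I) ^ (4 * k + 2)
      - ((2 * (p.1 : ℂ) - 1) + (2 * (p.2 : ℂ) + 1) * Complex.I) ^ (4 * k + 2)
      + ((2 * (p.1 : ℂ) - 1) + (2 * (p.2 : ℂ) - 1) * Complex.I) ^ (4 * k + 2)
      - ((2 * (p.1 : ℂ) + 1) + (2 * (p.2 : ℂ) - 1) * Complex.I) ^ (4 * k + 2)).im

/-- The polynomial harmonic function `f_n^x`. -/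
def fP (x : ℝ × ℝ) (n : ℕ) (ξ : ℝ × ℝ) : ℝ :=
  ∑ j ∈ Finset.range (n / 2 + 1),
    (-1 : ℝ) ^ j * (ξ.1 - x.1) ^ (n - 2 * j) * (ξ.2 - x.2) ^ (2 * j) /
      (((n - 2 * j).factorial : ℝ) * ((2 * j).factorial : ℝ))

/-- The polynomial harmonic function `g_n^x`. -/
def gP (x : ℝ × ℝ) (n : ℕ) (ξ : ℝ × ℝ) : ℝ :=
  ∑ j ∈ Finset.range ((n - 1) / 2 + 1),
    (-1 : ℝ) ^ j * (ξ.1 - x.1) ^ (n - 2 * j - 1) * (ξ.2 - x.2) ^ (2 * j + 1) /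
      (((n - 2 * j - 1).factorial : ℝ) * ((2 * j + 1).factorial : ℝ))

/-- Partial derivative in the first coordinate. -/
def pd1 (f : ℝ × ℝ → ℝ) (y : ℝ × ℝ) : ℝ := fderiv ℝ f y (1, 0)

/-- Partial derivative in the second coordinate. -/
def pd2 (f : ℝ × ℝ → ℝ) (y : ℝ × ℝ) : ℝ := fderiv ℝ f y (0, 1)

/-- `h` is harmonic on the open set `Ω`. -/
def HarmonicOn (h : ℝ × ℝ → ℝ) (Ω : Set (ℝ × ℝ)) : Prop :=
  ContDiffOn ℝ 2 h Ω ∧ ∀ y ∈ Ω, pd1 (pd1 h) y + pd2 (pd2 h) y = 0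

/-- `‖𝒫‖ = max_{p ∈ 𝒫} ‖2p+(1,1)‖`. -/
def PNorm (P : Finset (ℤ × ℤ)) : ℝ :=
  sSup ((fun p : ℤ × ℤ =>
    Real.sqrt ((2 * (p.1 : ℝ) + 1) ^ 2 + (2 * (p.2 : ℝ) + 1) ^ 2)) '' ↑P)

/-- The four corners of the unit square. -/
def qv : Fin 4 → ℝ × ℝ := ![(0, 0), (1, 0), (1, 1), (0, 1)]

/-- The contraction `F_i(x) = (x + q_i)/2`. -/
def Fc (i : Fin 4) (x : ℝ × ℝ) : ℝ × ℝ := ((x.1 + (qv i).1) / 2, (x.2 + (qv i).2) / 2)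

/-- `F_w = F_{w₁} ∘ ⋯ ∘ F_{w_m}` for a word `w` of length `m`. -/
def Fword {m : ℕ} (w : Fin m → Fin 4) : ℝ × ℝ → ℝ × ℝ :=
  (List.ofFn w).foldr (fun i acc => Fc i ∘ acc) id

/-- The center of the `m`-cell `F_w S`. -/
def cellCtr {m : ℕ} (w : Fin m → Fin 4) : ℝ × ℝ := Fword w (1 / 2, 1 / 2)

/-- `B_w(f)`: the average of `f` over the `m`-cell `F_w S` (a dyadic square of
side length `2⁻ᵐ` centered at `cellCtr w`). -/
def Bav (f : ℝ × ℝ → ℝ) {m : ℕ} (w : Fin m → Fin 4) : ℝ :=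
  Iavg f (cellCtr w) ((1 / 2) ^ m)

lemma measurableSet_Dsq (x : ℝ × ℝ) (l : ℝ) : MeasurableSet (Dsq x l) :=
  measurableSet_Icc.prod measurableSet_Icc

lemma isCompact_Dsq (x : ℝ × ℝ) (l : ℝ) : IsCompact (Dsq x l) :=
  isCompact_Icc.prod isCompact_Icc

lemma volume_Dsq (x : ℝ × ℝ) (l : ℝ) : volume (Dsq x l) = ENNReal.ofReal l * ENNReal.ofReal l := by
  rw [Dsq, Measure.volume_eq_prod, Measure.prod_prod, Real.volume_Icc, Real.volume_Icc]
  ring_nf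

lemma volume_Dsq_lt_top (x : ℝ × ℝ) (l : ℝ) : volume (Dsq x l) < ⊤ := by
  rw [volume_Dsq]; exact ENNReal.mul_lt_top ENNReal.ofReal_lt_top ENNReal.ofReal_lt_top

lemma volume_Dsq_toReal (x : ℝ × ℝ) {l : ℝ} (hl : 0 ≤ l) : (volume (Dsq x l)).toReal = l ^ 2 := by
  rw [volume_Dsq, ENNReal.toReal_mul, ENNReal.toReal_ofReal hl]; ring

lemma mem_Dsq_iff {x ξ : ℝ × ℝ} {l : ℝ} :
    ξ ∈ Dsq x l ↔ |ξ.1 - x.1| ≤ l / 2 ∧ |ξ.2 - x.2| ≤ l / 2 := by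
  simp only [Dsq, Set.mem_prod, Set.mem_Icc, abs_le]
  constructor
  · rintro ⟨⟨h1, h2⟩, h3, h4⟩; exact ⟨⟨by linarith, by linarith⟩, by linarith, by linarith⟩
  · rintro ⟨⟨h1, h2⟩, h3, h4⟩; exact ⟨⟨by linarith, by linarith⟩, by linarith, by linarith⟩

lemma norm_sub_le_of_mem_Dsq {x ξ : ℝ × ℝ} {l : ℝ} (h : ξ ∈ Dsq x l) : ‖ξ - x‖ ≤ l / 2 := by
  rw [mem_Dsq_iff] at h
  rw [Prod.norm_def]
  simpa [Real.norm_eq_abs, max_le_iff] using h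

lemma Dsq_translate_mem {x a ξ : ℝ × ℝ} {l : ℝ} : ξ + a ∈ Dsq (x + a) l ↔ ξ ∈ Dsq x l := by
  simp only [Dsq, Set.mem_prod, Set.mem_Icc, Prod.fst_add, Prod.snd_add]
  constructor
  · rintro ⟨⟨h1, h2⟩, h3, h4⟩; exact ⟨⟨by linarith, by linarith⟩, by linarith, by linarith⟩
  · rintro ⟨⟨h1, h2⟩, h3, h4⟩; exact ⟨⟨by linarith, by linarith⟩, by linarith, by linarith⟩

lemma setIntegral_Dsq_translate (f : ℝ × ℝ → ℝ) (x a : ℝ × ℝ) (l : ℝ) :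
    ∫ ξ in Dsq (x + a) l, f ξ = ∫ ξ in Dsq x l, f (ξ + a) := by
  rw [← integral_indicator (measurableSet_Dsq _ _), ← integral_indicator (measurableSet_Dsq _ _),
    ← integral_add_right_eq_self (fun ξ => (Dsq (x + a) l).indicator f ξ) a]
  congr 1
  funext ξ
  by_cases h : ξ ∈ Dsq x l
  · rw [Set.indicator_of_mem h, Set.indicator_of_mem (Dsq_translate_mem.mpr h)]
  · rw [Set.indicator_of_notMem h,
      Set.indicator_of_notMem (fun hc => h (Dsq_translate_mem.mp hc))]

set_option maxHeartbeats 1000000 in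
lemma keyTendsto' {Ω : Set (ℝ × ℝ)} (hΩ : IsOpen Ω) {f : ℝ × ℝ → ℝ}
    (hf : ContDiffOn ℝ 1 f Ω) {x : ℝ × ℝ} (hx : x ∈ Ω) (v : ℝ × ℝ) :
    Tendsto (fun l : ℝ => (Iavg f (x.1 + l * v.1, x.2 + l * v.2) l - Iavg f x l) / l)
      (𝓝[>] 0) (𝓝 (v.1 * pd1 f x + v.2 * pd2 f x)) := by
  set A := fderiv ℝ f x with hA
  have hAv : v.1 * pd1 f x + v.2 * pd2 f x = A v := by
    have hv : v = v.1 • ((1 : ℝ), (0 : ℝ)) + v.2 • ((0 : ℝ), (1 : ℝ)) := by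
      simp [Prod.ext_iff]
    conv_rhs => rw [hv]
    rw [A.map_add, A.map_smul, A.map_smul]
    simp [pd1, pd2, hA, smul_eq_mul]
  rw [hAv, Metric.tendsto_nhdsWithin_nhds]
  intro ε hε
  have hv1 : (0:ℝ) < ‖v‖ + 1 := by positivity
  set ε' : ℝ := ε / (2 * (‖v‖ + 1)) with hε'def
  have hε' : 0 < ε' := by positivity
  -- continuity of the derivative at x
  have hcont : ContinuousOn (fderiv ℝ f) Ω := hf.continuousOn_fderiv_of_isOpen hΩ le_rfl
  have hca : ContinuousAt (fderiv ℝ f) x := hcont.continuousAt (hΩ.mem_nhds hx)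
  rcases Metric.continuousAt_iff.1 hca ε' hε' with ⟨r₂, hr₂, hr₂'⟩
  rcases Metric.isOpen_iff.1 hΩ x hx with ⟨r₁, hr₁, hr₁'⟩
  set r : ℝ := min r₁ r₂ with hrdef
  have hr : 0 < r := lt_min hr₁ hr₂
  have hballΩ : Metric.ball x r ⊆ Ω := fun y hy => hr₁' (Metric.ball_subset_ball (min_le_left _ _) hy)
  have hballd : ∀ y ∈ Metric.ball x r, ‖fderiv ℝ f y - A‖ ≤ ε' := by
    intro y hy
    have : dist y x < r₂ := lt_of_lt_of_le (Metric.mem_ball.1 hy) (min_le_right _ _)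
    have := hr₂' this
    rw [dist_eq_norm] at this
    exact this.le
  refine ⟨r / (2 * (‖v‖ + 2)), by positivity, ?_⟩
  intro l hl hld
  have hl0 : 0 < l := hl
  have hld' : l < r / (2 * (‖v‖ + 2)) := by
    rw [Real.dist_eq, sub_zero, abs_of_pos hl0] at hld; exact hld
  set a : ℝ × ℝ := (l * v.1, l * v.2) with hadef
  have haeq : a = l • v := by simp [hadef, Prod.ext_iff, smul_eq_mul]
  have hna : ‖a‖ = l * ‖v‖ := by rw [haeq, norm_smul]; simp [abs_of_pos hl0]
  have hmemball : ∀ ξ ∈ Dsq x l, ξ ∈ Metric.ball x r ∧ ξ + a ∈ Metric.ball x r := by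
    intro ξ hξ
    have h1 : ‖ξ - x‖ ≤ l / 2 := norm_sub_le_of_mem_Dsq hξ
    have h2 : ‖ξ + a - x‖ ≤ l / 2 + l * ‖v‖ := by
      have : ξ + a - x = (ξ - x) + a := by abel
      rw [this]
      calc ‖(ξ - x) + a‖ ≤ ‖ξ - x‖ + ‖a‖ := norm_add_le _ _
        _ ≤ l / 2 + l * ‖v‖ := by rw [hna]; linarith
    have hvnn : (0:ℝ) ≤ ‖v‖ := norm_nonneg v
    have hlv : 0 ≤ l * ‖v‖ := by positivity
    have hkey : l / 2 + l * ‖v‖ < r := by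
      have h' := (lt_div_iff₀ (by positivity : (0:ℝ) < 2 * (‖v‖ + 2))).1 hld'
      nlinarith
    constructor
    · rw [Metric.mem_ball, dist_eq_norm]; linarith
    · rw [Metric.mem_ball, dist_eq_norm]; linarith
  -- MVT estimate
  have hMVT : ∀ ξ ∈ Dsq x l, ‖f (ξ + a) - f ξ - A a‖ ≤ ε' * ‖a‖ := by
    intro ξ hξ
    obtain ⟨hξb, hξab⟩ := hmemball ξ hξ
    set g : ℝ × ℝ → ℝ := fun y => f y - A y with hgdef
    have hder : ∀ y ∈ Metric.ball x r, HasFDerivWithinAt g (fderiv ℝ f y - A) (Metric.ball x r) y := by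
      intro y hy
      have hyΩ : y ∈ Ω := hballΩ hy
      have hdy : DifferentiableAt ℝ f y :=
        (hf.contDiffAt (hΩ.mem_nhds hyΩ)).differentiableAt (by norm_num)
      exact ((hdy.hasFDerivAt.sub (A.hasFDerivAt))).hasFDerivWithinAt
    have := Convex.norm_image_sub_le_of_norm_hasFDerivWithin_le hder hballd
      (convex_ball x r) hξb hξab
    have heq : g (ξ + a) - g ξ = f (ξ + a) - f ξ - A a := by
      simp only [hgdef, map_add]; ring
    rw [heq] at this
    have : ‖f (ξ + a) - f ξ - A a‖ ≤ ε' * ‖ξ + a - ξ‖ := this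
    simpa using this
  -- integrability
  have hsubΩ : Dsq x l ⊆ Ω := fun ξ hξ => hballΩ (hmemball ξ hξ).1
  have hcf : ContinuousOn f Ω := hf.continuousOn
  have int1 : IntegrableOn f (Dsq x l) := (hcf.mono hsubΩ).integrableOn_compact (isCompact_Dsq x l)
  have int2 : IntegrableOn (fun ξ => f (ξ + a)) (Dsq x l) := by
    apply ContinuousOn.integrableOn_compact (isCompact_Dsq x l)
    apply hcf.comp ((continuous_id.add continuous_const).continuousOn)
    intro ξ hξ
    exact hballΩ (hmemball ξ hξ).2
  have intc : IntegrableOn (fun _ : ℝ × ℝ => A a) (Dsq x l) :=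
    integrableOn_const (volume_Dsq_lt_top x l).ne (by simp)
  -- the integral identity
  have hpt : ((x.1 + l * v.1, x.2 + l * v.2) : ℝ × ℝ) = x + a := by
    simp [hadef, Prod.ext_iff]
  have hμ : (volume (Dsq x l)).toReal = l ^ 2 := volume_Dsq_toReal x hl0.le
  have e1 : ∫ ξ in Dsq x l, (f (ξ + a) - f ξ - A a) =
      (∫ ξ in Dsq x l, (f (ξ + a) - f ξ)) - ∫ _ξ in Dsq x l, (A a : ℝ) := by
    apply integral_sub _ intc
    exact int2.sub int1
  have e2 : ∫ ξ in Dsq x l, (f (ξ + a) - f ξ)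
      = (∫ ξ in Dsq x l, f (ξ + a)) - ∫ ξ in Dsq x l, f ξ := integral_sub int2 int1
  have e3 : ∫ _ξ in Dsq x l, (A a : ℝ) = l ^ 2 * A a := by
    rw [setIntegral_const, Measure.real, hμ, smul_eq_mul]
  set d : ℝ := Iavg f (x.1 + l * v.1, x.2 + l * v.2) l - Iavg f x l with hd
  have hl2 : (0:ℝ) < l ^ 2 := by positivity
  have hIdiff : d - A a = (1 / l ^ 2) * ∫ ξ in Dsq x l, (f (ξ + a) - f ξ - A a) := by
    rw [e1, e2, e3, hd, hpt, Iavg, Iavg, setIntegral_Dsq_translate]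
    field_simp
  have hint3 : IntegrableOn (fun ξ => f (ξ + a) - f ξ - A a) (Dsq x l) := by
    apply Integrable.sub _ intc
    exact int2.sub int1
  have hbound : ‖∫ ξ in Dsq x l, (f (ξ + a) - f ξ - A a)‖ ≤ (ε' * ‖a‖) * l ^ 2 := by
    have h := norm_setIntegral_le_of_norm_le_const (μ := volume) (s := Dsq x l)
      (f := fun ξ => f (ξ + a) - f ξ - A a) (C := ε' * ‖a‖) (volume_Dsq_lt_top x l)
      (fun ξ hξ => hMVT ξ hξ)
    rwa [Measure.real, hμ] at h
  have hAa : A a = l * A v := by rw [haeq, A.map_smul, smul_eq_mul]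
  have hest : |d - A a| ≤ ε' * ‖a‖ := by
    rw [hIdiff, abs_mul, abs_of_pos (show (0:ℝ) < 1 / l ^ 2 by positivity)]
    calc 1 / l ^ 2 * |∫ ξ in Dsq x l, (f (ξ + a) - f ξ - A a)|
        ≤ 1 / l ^ 2 * ((ε' * ‖a‖) * l ^ 2) := by
          apply mul_le_mul_of_nonneg_left _ (by positivity)
          simpa [Real.norm_eq_abs] using hbound
      _ = ε' * ‖a‖ := by field_simp
  have hfin : |d / l - A v| ≤ ε' * ‖v‖ := by
    have heq : d / l - A v = (d - A a) / l := by rw [hAa]; field_simp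
    rw [heq, abs_div, abs_of_pos hl0, div_le_iff₀ hl0]
    calc |d - A a| ≤ ε' * ‖a‖ := hest
      _ = ε' * ‖v‖ * l := by rw [hna]; ring
  rw [Real.dist_eq]
  calc |d / l - A v| ≤ ε' * ‖v‖ := hfin
    _ < ε := by
      rw [hε'def, div_mul_eq_mul_div, div_lt_iff₀ (by positivity)]
      nlinarith [norm_nonneg v]

lemma keyTendsto {Ω : Set (ℝ × ℝ)} (hΩ : IsOpen Ω) {f : ℝ × ℝ → ℝ}
    (hf : ContDiffOn ℝ 1 f Ω) {x : ℝ × ℝ} (hx : x ∈ Ω) (v : ℝ × ℝ) :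
    Tendsto (fun l : ℝ => (1 / l ^ 2) * (Iavg f (x.1 + l * v.1, x.2 + l * v.2) l - Iavg f x l) ^ 2)
      (𝓝[>] 0) (𝓝 ((v.1 * pd1 f x + v.2 * pd2 f x) ^ 2)) := by
  have h := keyTendsto' hΩ hf hx v
  have h2 := h.mul h
  apply Tendsto.congr' _ (by simpa [sq] using h2)
  filter_upwards [self_mem_nhdsWithin] with l hl
  have hl0 : (l : ℝ) ≠ 0 := ne_of_gt hl
  field_simp

lemma mainCase {Ω : Set (ℝ × ℝ)} (hΩ : IsOpen Ω) {f : ℝ × ℝ → ℝ}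
    (hf : ContDiffOn ℝ 1 f Ω) {x : ℝ × ℝ} (hx : x ∈ Ω) {n : ℕ}
    (vs : Fin n → ℝ × ℝ) (hinj : Function.Injective vs) (p : ℤ × ℤ)
    (hset : ∀ l : ℝ, 0 < l → {x' : ℝ × ℝ | isNbr p l x x'} =
      Set.range (fun i => ((x.1 + l * (vs i).1, x.2 + l * (vs i).2) : ℝ × ℝ))) (c : ℝ)
    (hc : ∑ i : Fin n, ((vs i).1 * pd1 f x + (vs i).2 * pd2 f x) ^ 2 = c) :
    Tendsto (fun l : ℝ => (1 / l ^ 2) *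
        ∑ᶠ x' ∈ {x' : ℝ × ℝ | isNbr p l x x'}, (Iavg f x' l - Iavg f x l) ^ 2)
      (𝓝[>] 0) (𝓝 c) := by
  have hlim : Tendsto (fun l : ℝ => ∑ i : Fin n,
      (1 / l ^ 2) * (Iavg f (x.1 + l * (vs i).1, x.2 + l * (vs i).2) l - Iavg f x l) ^ 2)
      (𝓝[>] 0) (𝓝 c) := by
    rw [← hc]
    exact tendsto_finset_sum _ (fun i _ => keyTendsto hΩ hf hx (vs i))
  apply Tendsto.congr' _ hlim
  filter_upwards [self_mem_nhdsWithin] with l hl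
  have hset' : ∀ x' : ℝ × ℝ, isNbr p l x x' ↔
      x' ∈ Set.range (fun i => ((x.1 + l * (vs i).1, x.2 + l * (vs i).2) : ℝ × ℝ)) := by
    intro x'
    rw [← hset l hl]
    exact Iff.rfl
  have hinj' : Function.Injective (fun i : Fin n => ((x.1 + l * (vs i).1, x.2 + l * (vs i).2) : ℝ × ℝ)) := by
    intro i j hij
    apply hinj
    have h1 := congrArg Prod.fst hij
    have h2 := congrArg Prod.snd hij
    simp only at h1 h2
    have hl0 : l ≠ 0 := ne_of_gt hl
    have e1 : l * (vs i).1 = l * (vs j).1 := by linarith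
    have e2 : l * (vs i).2 = l * (vs j).2 := by linarith
    exact Prod.ext (mul_left_cancel₀ hl0 e1) (mul_left_cancel₀ hl0 e2)
  simp only [hset']
  rw [finsum_mem_range hinj', finsum_eq_sum_of_fintype, Finset.mul_sum]

lemma habs {l : ℝ} (hl : 0 ≤ l) (u t : ℝ) : |u + l * t - u| = |t| * l := by
  rw [add_sub_cancel_left, abs_mul, abs_of_nonneg hl, mul_comm]

lemma vec8_eval {α : Type*} (a b c d e f g h : α) :
    ![a,b,c,d,e,f,g,h] 0 = a ∧ ![a,b,c,d,e,f,g,h] 1 = b ∧ ![a,b,c,d,e,f,g,h] 2 = c ∧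
    ![a,b,c,d,e,f,g,h] 3 = d ∧ ![a,b,c,d,e,f,g,h] 4 = e ∧ ![a,b,c,d,e,f,g,h] 5 = f ∧
    ![a,b,c,d,e,f,g,h] 6 = g ∧ ![a,b,c,d,e,f,g,h] 7 = h :=
  ⟨rfl, rfl, rfl, rfl, rfl, rfl, rfl, rfl⟩

lemma v8_0 {α : Type*} (a b c d e f g h : α) : ![a,b,c,d,e,f,g,h] 0 = a := rfl
lemma v8_1 {α : Type*} (a b c d e f g h : α) : ![a,b,c,d,e,f,g,h] 1 = b := rfl
lemma v8_2 {α : Type*} (a b c d e f g h : α) : ![a,b,c,d,e,f,g,h] 2 = c := rfl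
lemma v8_3 {α : Type*} (a b c d e f g h : α) : ![a,b,c,d,e,f,g,h] 3 = d := rfl
lemma v8_4 {α : Type*} (a b c d e f g h : α) : ![a,b,c,d,e,f,g,h] 4 = e := rfl
lemma v8_5 {α : Type*} (a b c d e f g h : α) : ![a,b,c,d,e,f,g,h] 5 = f := rfl
lemma v8_6 {α : Type*} (a b c d e f g h : α) : ![a,b,c,d,e,f,g,h] 6 = g := rfl
lemma v8_7 {α : Type*} (a b c d e f g h : α) : ![a,b,c,d,e,f,g,h] 7 = h := rfl


set_option maxHeartbeats 4000000 in
/-- sum of squared differences over `p`-neighbors recovers `4‖p‖²c_p|∇f|²`. -/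
theorem stmt12 (p : ℤ × ℤ) (hp1 : 0 ≤ p.1) (hp2 : p.1 ≤ p.2)
    (Ω : Set (ℝ × ℝ)) (hΩ : IsOpen Ω) (f : ℝ × ℝ → ℝ) (hf : ContDiffOn ℝ 1 f Ω)
    (x : ℝ × ℝ) (hx : x ∈ Ω) :
    Filter.Tendsto
      (fun l : ℝ => (1 / l ^ 2) *
        ∑ᶠ x' ∈ {x' : ℝ × ℝ | isNbr p l x x'}, (Iavg f x' l - Iavg f x l) ^ 2)
      (𝓝[>] (0 : ℝ))
      (𝓝 (4 * ((p.1 : ℝ) ^ 2 + (p.2 : ℝ) ^ 2) * cP p *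
        ((pd1 f x) ^ 2 + (pd2 f x) ^ 2))) := by
  by_cases hc2 : p.2 = 0
  · -- p = (0,0)
    have hc1 : p.1 = 0 := by omega
    have hset0 : ∀ l : ℝ, {x' : ℝ × ℝ | isNbr p l x x'} = {x} := by
      intro l; ext x'
      simp [isNbr, hc1, hc2, Prod.ext_iff, sub_eq_zero, abs_eq_zero, and_comm]
    have hfn : (fun l : ℝ => (1 / l ^ 2) *
        ∑ᶠ x' ∈ {x' : ℝ × ℝ | isNbr p l x x'}, (Iavg f x' l - Iavg f x l) ^ 2)
        = fun _ : ℝ => (0:ℝ) := by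
      funext l; rw [hset0 l, finsum_mem_singleton]; simp
    rw [hfn, show (4 * ((p.1 : ℝ) ^ 2 + (p.2 : ℝ) ^ 2) * cP p *
        ((pd1 f x) ^ 2 + (pd2 f x) ^ 2)) = 0 by rw [hc1, hc2]; push_cast; ring]
    exact tendsto_const_nhds
  by_cases hc1 : p.1 = 0
  · -- p.1 = 0 < p.2
    have h2pos : (0:ℤ) < p.2 := by omega
    have hb : (0:ℝ) < (p.2:ℝ) := by exact_mod_cast h2pos
    have hcast1 : ((p.1:ℤ):ℝ) = 0 := by rw [hc1]; norm_num
    refine mainCase hΩ hf hx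
      (![((p.2:ℝ),0),(-(p.2:ℝ),0),(0,(p.2:ℝ)),(0,-(p.2:ℝ))]) ?_ p ?_ _ ?_
    · intro i j hij
      fin_cases i <;> fin_cases j <;> simp_all [Prod.ext_iff] <;>
        (try (have h2' : (0:ℝ) < (p.2:ℝ) := by exact_mod_cast (by omega : (0:ℤ) < p.2))) <;>
        (try (have h1' : (0:ℝ) < (p.1:ℝ) := by exact_mod_cast (by omega : (0:ℤ) < p.1))) <;> linarith
    · intro l hl
      ext x'
      simp only [Set.mem_setOf_eq, isNbr, Set.mem_range, hcast1, zero_mul]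
      constructor
      · rintro (⟨h1, h2⟩ | ⟨h1, h2⟩)
        · rw [abs_eq_zero, sub_eq_zero] at h1
          rcases (abs_eq (by positivity : (0:ℝ) ≤ (p.2:ℝ) * l)).1 h2 with h | h
          all_goals first
          | (refine ⟨0, ?_⟩; apply Prod.ext <;> simp <;> linarith [mul_comm ((p.2:ℝ)) l])
          | (refine ⟨1, ?_⟩; apply Prod.ext <;> simp <;> linarith [mul_comm ((p.2:ℝ)) l])
          | (refine ⟨2, ?_⟩; apply Prod.ext <;> simp <;> linarith [mul_comm ((p.2:ℝ)) l])
          | (refine ⟨3, ?_⟩; apply Prod.ext <;> simp <;> linarith [mul_comm ((p.2:ℝ)) l])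
        · rw [abs_eq_zero, sub_eq_zero] at h2
          rcases (abs_eq (by positivity : (0:ℝ) ≤ (p.2:ℝ) * l)).1 h1 with h | h
          all_goals first
          | (refine ⟨0, ?_⟩; apply Prod.ext <;> simp <;> linarith [mul_comm ((p.2:ℝ)) l])
          | (refine ⟨1, ?_⟩; apply Prod.ext <;> simp <;> linarith [mul_comm ((p.2:ℝ)) l])
          | (refine ⟨2, ?_⟩; apply Prod.ext <;> simp <;> linarith [mul_comm ((p.2:ℝ)) l])
          | (refine ⟨3, ?_⟩; apply Prod.ext <;> simp <;> linarith [mul_comm ((p.2:ℝ)) l])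
      · rintro ⟨i, rfl⟩
        fin_cases i <;>
          simp [abs_mul, abs_of_pos hl, abs_of_pos hb, mul_comm]
    · rw [Fin.sum_univ_four]
      have e1 : ¬(p.1 = 0 ∧ p.2 = 0) := by omega
      have e2 : (p.1 = 0 ∨ p.1 = p.2) := Or.inl hc1
      rw [cP, if_neg e1, if_pos e2, hcast1]
      simp only [Matrix.cons_val_zero, Matrix.cons_val_one, Matrix.head_cons,
        Matrix.cons_val_two, Matrix.tail_cons, Matrix.cons_val_three]
      ring
  by_cases hc12 : p.1 = p.2
  · -- 0 < p.1 = p.2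
    have h1pos : (0:ℤ) < p.1 := by omega
    have ha : (0:ℝ) < (p.1:ℝ) := by exact_mod_cast h1pos
    have hcast : ((p.2:ℤ):ℝ) = ((p.1:ℤ):ℝ) := by rw [hc12]
    refine mainCase hΩ hf hx
      (![((p.1:ℝ),(p.1:ℝ)),((p.1:ℝ),-(p.1:ℝ)),(-(p.1:ℝ),(p.1:ℝ)),(-(p.1:ℝ),-(p.1:ℝ))]) ?_ p ?_ _ ?_
    · intro i j hij
      fin_cases i <;> fin_cases j <;> simp_all [Prod.ext_iff] <;>
        (try (have h2' : (0:ℝ) < (p.2:ℝ) := by exact_mod_cast (by omega : (0:ℤ) < p.2))) <;>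
        (try (have h1' : (0:ℝ) < (p.1:ℝ) := by exact_mod_cast (by omega : (0:ℤ) < p.1))) <;> linarith
    · intro l hl
      ext x'
      simp only [Set.mem_setOf_eq, isNbr, Set.mem_range, hcast]
      constructor
      · rintro (⟨h1, h2⟩ | ⟨h1, h2⟩) <;>
        rcases (abs_eq (by positivity : (0:ℝ) ≤ (p.1:ℝ) * l)).1 h1 with h | h <;>
        rcases (abs_eq (by positivity : (0:ℝ) ≤ (p.1:ℝ) * l)).1 h2 with h' | h' <;>
        first
        | (refine ⟨0, ?_⟩; apply Prod.ext <;> simp <;> linarith [mul_comm ((p.1:ℝ)) l])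
        | (refine ⟨1, ?_⟩; apply Prod.ext <;> simp <;> linarith [mul_comm ((p.1:ℝ)) l])
        | (refine ⟨2, ?_⟩; apply Prod.ext <;> simp <;> linarith [mul_comm ((p.1:ℝ)) l])
        | (refine ⟨3, ?_⟩; apply Prod.ext <;> simp <;> linarith [mul_comm ((p.1:ℝ)) l])
      · rintro ⟨i, rfl⟩
        fin_cases i <;>
          simp [abs_mul, abs_of_pos hl, abs_of_pos ha, mul_comm]
    · rw [Fin.sum_univ_four]
      have e1 : ¬(p.1 = 0 ∧ p.2 = 0) := by omega
      have e2 : (p.1 = 0 ∨ p.1 = p.2) := Or.inr hc12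
      rw [cP, if_neg e1, if_pos e2, ← hc12]
      simp only [Matrix.cons_val_zero, Matrix.cons_val_one, Matrix.head_cons,
        Matrix.cons_val_two, Matrix.tail_cons, Matrix.cons_val_three]
      ring
  · -- 0 < p.1 < p.2
    have h1pos : (0:ℤ) < p.1 := by omega
    have h12 : p.1 < p.2 := by omega
    have ha : (0:ℝ) < (p.1:ℝ) := by exact_mod_cast h1pos
    have hb : (0:ℝ) < (p.2:ℝ) := by exact_mod_cast (by omega : (0:ℤ) < p.2)
    have hab : (p.1:ℝ) < (p.2:ℝ) := by exact_mod_cast h12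
    refine mainCase hΩ hf hx
      (![((p.1:ℝ),(p.2:ℝ)),((p.1:ℝ),-(p.2:ℝ)),(-(p.1:ℝ),(p.2:ℝ)),(-(p.1:ℝ),-(p.2:ℝ)),
         ((p.2:ℝ),(p.1:ℝ)),((p.2:ℝ),-(p.1:ℝ)),(-(p.2:ℝ),(p.1:ℝ)),(-(p.2:ℝ),-(p.1:ℝ))]) ?_ p ?_ _ ?_
    · intro i j hij
      fin_cases i <;> fin_cases j <;> simp_all [Prod.ext_iff, v8_0, v8_1, v8_2, v8_3, v8_4, v8_5, v8_6, v8_7] <;>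
        (try (have h2' : (0:ℝ) < (p.2:ℝ) := by exact_mod_cast (by omega : (0:ℤ) < p.2))) <;>
        (try (have h1' : (0:ℝ) < (p.1:ℝ) := by exact_mod_cast (by omega : (0:ℤ) < p.1))) <;> linarith
    · intro l hl
      ext x'
      simp only [Set.mem_setOf_eq, isNbr, Set.mem_range]
      constructor
      · rintro (⟨h1, h2⟩ | ⟨h1, h2⟩)
        · rcases (abs_eq (by positivity : (0:ℝ) ≤ (p.1:ℝ) * l)).1 h1 with h | h <;>
          rcases (abs_eq (by positivity : (0:ℝ) ≤ (p.2:ℝ) * l)).1 h2 with h' | h' <;>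
          first
          | (refine ⟨0, ?_⟩; apply Prod.ext <;> simp [v8_0, v8_1, v8_2, v8_3, v8_4, v8_5, v8_6, v8_7] <;> linarith [mul_comm ((p.1:ℝ)) l, mul_comm ((p.2:ℝ)) l])
          | (refine ⟨1, ?_⟩; apply Prod.ext <;> simp [v8_0, v8_1, v8_2, v8_3, v8_4, v8_5, v8_6, v8_7] <;> linarith [mul_comm ((p.1:ℝ)) l, mul_comm ((p.2:ℝ)) l])
          | (refine ⟨2, ?_⟩; apply Prod.ext <;> simp [v8_0, v8_1, v8_2, v8_3, v8_4, v8_5, v8_6, v8_7] <;> linarith [mul_comm ((p.1:ℝ)) l, mul_comm ((p.2:ℝ)) l])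
          | (refine ⟨3, ?_⟩; apply Prod.ext <;> simp [v8_0, v8_1, v8_2, v8_3, v8_4, v8_5, v8_6, v8_7] <;> linarith [mul_comm ((p.1:ℝ)) l, mul_comm ((p.2:ℝ)) l])
        · rcases (abs_eq (by positivity : (0:ℝ) ≤ (p.2:ℝ) * l)).1 h1 with h | h <;>
          rcases (abs_eq (by positivity : (0:ℝ) ≤ (p.1:ℝ) * l)).1 h2 with h' | h' <;>
          first
          | (refine ⟨4, ?_⟩; apply Prod.ext <;> simp [v8_0, v8_1, v8_2, v8_3, v8_4, v8_5, v8_6, v8_7] <;> linarith [mul_comm ((p.1:ℝ)) l, mul_comm ((p.2:ℝ)) l])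
          | (refine ⟨5, ?_⟩; apply Prod.ext <;> simp [v8_0, v8_1, v8_2, v8_3, v8_4, v8_5, v8_6, v8_7] <;> linarith [mul_comm ((p.1:ℝ)) l, mul_comm ((p.2:ℝ)) l])
          | (refine ⟨6, ?_⟩; apply Prod.ext <;> simp [v8_0, v8_1, v8_2, v8_3, v8_4, v8_5, v8_6, v8_7] <;> linarith [mul_comm ((p.1:ℝ)) l, mul_comm ((p.2:ℝ)) l])
          | (refine ⟨7, ?_⟩; apply Prod.ext <;> simp [v8_0, v8_1, v8_2, v8_3, v8_4, v8_5, v8_6, v8_7] <;> linarith [mul_comm ((p.1:ℝ)) l, mul_comm ((p.2:ℝ)) l])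
      · rintro ⟨i, rfl⟩
        fin_cases i <;>
          simp [v8_0, v8_1, v8_2, v8_3, v8_4, v8_5, v8_6, v8_7, abs_mul, abs_of_pos hl, abs_of_pos ha, abs_of_pos hb, mul_comm]
    · rw [Fin.sum_univ_eight]
      have e1 : ¬(p.1 = 0 ∧ p.2 = 0) := by omega
      have e2 : ¬(p.1 = 0 ∨ p.1 = p.2) := by omega
      rw [cP, if_neg e1, if_neg e2]
      simp only [v8_0, v8_1, v8_2, v8_3, v8_4, v8_5, v8_6, v8_7]
      ring
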